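/- Fix a, b, c ∈ ℂ with a ≠ b, and d > 0, and let S_d = [[a, d], [cd, b]]. Then W(S_d) degenerates to a line segment if and only if c = (a−b)²/|a−b|². In that case W(S_d) is the closed segment with endpoints (a + b ± (a−b)√(1 + 4d²/|a−b|²))/2. -/

import Mathlib

open ComplexConjugate

/-- The numerical range of a `2 × 2` complex matrix. -/
noncomputable def numRange (M : Matrix (Fin 2) (Fin 2) ℂ) : Set ℂ :=
  {z | ∃ x : EuclideanSpace ℂ (Fin 2), ‖x‖ = 1 ∧
    z = inner (𝕜 := ℂ) x (Matrix.toEuclideanCLM (𝕜 := ℂ) M x)}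

noncomputable def vec2 (p q : ℂ) : EuclideanSpace ℂ (Fin 2) :=
  (WithLp.equiv 2 (Fin 2 → ℂ)).symm ![p, q]

@[simp] lemma vec2_zero (p q : ℂ) : vec2 p q 0 = p := rfl
@[simp] lemma vec2_one (p q : ℂ) : vec2 p q 1 = q := rfl

lemma quadForm (M : Matrix (Fin 2) (Fin 2) ℂ) (x : EuclideanSpace ℂ (Fin 2)) :
    inner (𝕜 := ℂ) x (Matrix.toEuclideanCLM (𝕜 := ℂ) M x) =
      conj (x 0) * (M 0 0 * x 0 + M 0 1 * x 1) +
      conj (x 1) * (M 1 0 * x 0 + M 1 1 * x 1) := by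
  have h : ∀ i, (Matrix.toEuclideanCLM (𝕜 := ℂ) M x) i = (M.mulVec x) i := fun i => rfl
  rw [PiLp.inner_apply]
  simp [h, Matrix.mulVec, dotProduct, Fin.sum_univ_two, RCLike.inner_apply]
  ring

lemma normSq_sum (x : EuclideanSpace ℂ (Fin 2)) (hx : ‖x‖ = 1) :
    Complex.normSq (x 0) + Complex.normSq (x 1) = 1 := by
  rw [EuclideanSpace.norm_eq, Real.sqrt_eq_one, Fin.sum_univ_two] at hx
  simpa [Complex.sq_norm] using hx

lemma vec2_norm (p q : ℂ) (h : Complex.normSq p + Complex.normSq q = 1) :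
    ‖vec2 p q‖ = 1 := by
  rw [EuclideanSpace.norm_eq, Real.sqrt_eq_one, Fin.sum_univ_two]
  simpa [Complex.sq_norm] using h

lemma mem_numRange (M : Matrix (Fin 2) (Fin 2) ℂ) (p q : ℂ)
    (h : Complex.normSq p + Complex.normSq q = 1) :
    conj p * (M 0 0 * p + M 0 1 * q) + conj q * (M 1 0 * p + M 1 1 * q) ∈ numRange M :=
  ⟨vec2 p q, vec2_norm p q h, by rw [quadForm]; simp⟩

lemma toCLM_apply (M : Matrix (Fin 2) (Fin 2) ℂ) (p q : ℂ) (i : Fin 2) :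
    (Matrix.toEuclideanCLM (𝕜 := ℂ) M (vec2 p q)) i = M i 0 * p + M i 1 * q := by
  show (M.mulVec ![p, q]) i = _
  simp [Matrix.mulVec, dotProduct, Fin.sum_univ_two]

lemma eig_combo (T : EuclideanSpace ℂ (Fin 2) →L[ℂ] EuclideanSpace ℂ (Fin 2))
    (x y : EuclideanSpace ℂ (Fin 2)) (μ ν : ℂ)
    (hx : T x = μ • x) (hy : T y = ν • y)
    (ho : inner (𝕜 := ℂ) x y = 0) (hx1 : ‖x‖ = 1) (hy1 : ‖y‖ = 1)
    (α β : ℝ) (hs : α ^ 2 + β ^ 2 = 1) :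
    ‖(α : ℂ) • x + (β : ℂ) • y‖ = 1 ∧
      inner (𝕜 := ℂ) ((α : ℂ) • x + (β : ℂ) • y) (T ((α : ℂ) • x + (β : ℂ) • y)) =
        (α : ℂ) ^ 2 * μ + (β : ℂ) ^ 2 * ν := by
  have ho' : inner (𝕜 := ℂ) y x = 0 := by
    rw [← inner_conj_symm, ho, map_zero]
  have hxx : inner (𝕜 := ℂ) x x = 1 := by
    rw [inner_self_eq_norm_sq_to_K, hx1]; norm_num
  have hyy : inner (𝕜 := ℂ) y y = 1 := by
    rw [inner_self_eq_norm_sq_to_K, hy1]; norm_num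
  constructor
  · have h2 : ‖(α : ℂ) • x + (β : ℂ) • y‖ ^ 2 = 1 := by
      have := inner_self_eq_norm_sq (𝕜 := ℂ) ((α : ℂ) • x + (β : ℂ) • y)
      rw [← this, inner_add_add_self]
      simp only [inner_smul_left, inner_smul_right, hxx, hyy, ho, ho', Complex.conj_ofReal]
      rw [show (α:ℂ) * ((α:ℂ) * 1) + (β:ℂ) * ((α:ℂ) * 0) + (α:ℂ) * ((β:ℂ) * 0)
          + (β:ℂ) * ((β:ℂ) * 1) = ((α^2+β^2 : ℝ) : ℂ) by push_cast; ring, hs]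
      simp
    nlinarith [norm_nonneg ((α : ℂ) • x + (β : ℂ) • y), h2]
  · rw [map_add, map_smul, map_smul, hx, hy, smul_smul, smul_smul]
    rw [inner_add_left, inner_add_right, inner_add_right]
    simp only [inner_smul_left, inner_smul_right, hxx, hyy, ho, ho', Complex.conj_ofReal]
    ring

set_option maxHeartbeats 1600000 in
lemma lemmaA (a b c : ℂ) (hab : a ≠ b) (d : ℝ) (hd : 0 < d)
    (hc : c = (a - b) ^ 2 / ((‖a - b‖ : ℂ) ^ 2)) :
    numRange !![a, (d : ℂ); c * d, b] =
      segment ℝ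
        ((a + b + (a - b) * Real.sqrt (1 + 4 * d ^ 2 / ‖a - b‖ ^ 2)) / 2)
        ((a + b - (a - b) * Real.sqrt (1 + 4 * d ^ 2 / ‖a - b‖ ^ 2)) / 2) := by
  have hv : a - b ≠ 0 := sub_ne_zero.2 hab
  set v : ℂ := a - b with hvdef
  set m : ℝ := ‖v‖ with hmdef
  have hm : 0 < m := by rw [hmdef]; exact norm_pos_iff.mpr hv
  have hmC : (m : ℂ) ≠ 0 := by exact_mod_cast hm.ne'
  have hm2 : ((m : ℂ)) ^ 2 = v * conj v := by
    rw [Complex.mul_conj]; norm_cast; rw [hmdef]; exact Complex.sq_norm v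
  have hcv : conj v ≠ 0 := by simpa using hv
  have hc' : c = v / conj v := by rw [hc, hm2, pow_two, mul_div_mul_left _ _ hv]
  have hcV : c * conj v = v := by rw [hc']; field_simp
  set s : ℝ := 1 + 4 * d ^ 2 / m ^ 2 with hsdef
  have hs0 : 0 < s := by positivity
  have hs1 : 1 < s := by rw [hsdef]; nlinarith [sq_nonneg d, sq_nonneg m, div_pos (by positivity : (0:ℝ) < 4*d^2) (by positivity : (0:ℝ) < m^2)]
  set R : ℝ := Real.sqrt s with hRdef
  have hR2 : R ^ 2 = s := Real.sq_sqrt hs0.le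
  have hRpos : 0 < R := by rw [hRdef]; exact Real.sqrt_pos.2 hs0
  have hR1 : 1 < R := by nlinarith
  have hRC : (R : ℂ) ≠ 0 := by exact_mod_cast hRpos.ne'
  have hR2m : (R : ℂ) ^ 2 * (m : ℂ) ^ 2 = (m : ℂ) ^ 2 + 4 * (d : ℂ) ^ 2 := by
    have h1 : R ^ 2 * m ^ 2 = m ^ 2 + 4 * d ^ 2 := by
      rw [hR2, hsdef]; field_simp
    exact_mod_cast congrArg Complex.ofReal h1
  have hdC : (d : ℂ) ≠ 0 := by exact_mod_cast hd.ne'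
  have e00 : (!![a, (d:ℂ); c * d, b]) 0 0 = a := by simp
  have e01 : (!![a, (d:ℂ); c * d, b]) 0 1 = (d:ℂ) := by simp
  have e10 : (!![a, (d:ℂ); c * d, b]) 1 0 = c * d := by simp
  have e11 : (!![a, (d:ℂ); c * d, b]) 1 1 = b := by simp
  clear_value v m s R
  ext z
  constructor
  · rintro ⟨x, hx1, rfl⟩
    rw [quadForm, e00, e01, e10, e11]
    have hn : Complex.normSq (x 0) + Complex.normSq (x 1) = 1 := normSq_sum x hx1
    set X := x 0 with hX
    set Y := x 1 with hY
    clear_value X Y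
    set n₀ : ℝ := Complex.normSq X with hn₀
    set n₁ : ℝ := Complex.normSq Y with hn₁
    have hn0C : ((n₀ : ℝ) : ℂ) = X * conj X := by rw [hn₀, Complex.mul_conj]
    have hn1C : ((n₁ : ℝ) : ℂ) = Y * conj Y := by rw [hn₁, Complex.mul_conj]
    have hnC : X * conj X + Y * conj Y = 1 := by
      rw [← hn0C, ← hn1C]; exact_mod_cast hn
    set w : ℂ := (d : ℂ) * conj v * conj X * Y with hwdef
    have hwc : conj w = (d : ℂ) * v * X * conj Y := by
      rw [hwdef]; simp [map_mul, Complex.conj_conj, Complex.conj_ofReal]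
    set ρ : ℝ := 2 * w.re with hρdef
    have hρC : ((ρ : ℝ) : ℂ) = w + conj w := by
      rw [Complex.add_conj]
    have hn0n₁ : 0 ≤ n₀ := by rw [hn₀]; exact Complex.normSq_nonneg X
    have hn1n₁ : 0 ≤ n₁ := by rw [hn₁]; exact Complex.normSq_nonneg Y
    have hnsv : Complex.normSq v = m ^ 2 := by
      rw [hmdef, ← Complex.sq_norm]
    have hw2 : Complex.normSq w = d ^ 2 * m ^ 2 * (n₀ * n₁) := by
      rw [hwdef]
      simp only [Complex.normSq_mul, Complex.normSq_conj, Complex.normSq_ofReal, hnsv,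
        ← hn₀, ← hn₁]
      ring
    have hwre : Complex.normSq w = w.re * w.re + w.im * w.im := Complex.normSq_apply w
    have hρsq : ρ ^ 2 = 4 * (w.re * w.re) := by rw [hρdef]; ring
    have hρ2 : ρ ^ 2 ≤ 4 * (d ^ 2 * m ^ 2 * (n₀ * n₁)) := by
      nlinarith [sq_nonneg w.im, hw2, hwre, hρsq]
    clear_value n₀ n₁ ρ
    set Qm : ℝ := m ^ 2 * (n₀ - n₁) / 2 + ρ with hQmdef
    have hvalm : (conj X * (a * X + (d:ℂ) * Y) + conj Y * (c * (d:ℂ) * X + b * Y)) * (m:ℂ)^2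
        = ((a + b) / 2) * (m:ℂ)^2 + v * ((Qm : ℝ) : ℂ) := by
      have hQmC : ((Qm : ℝ) : ℂ) = (m:ℂ)^2 * (((n₀:ℝ):ℂ) - ((n₁:ℝ):ℂ)) / 2 + (w + conj w) := by
        rw [← hρC, hQmdef]; push_cast; ring
      rw [hQmC, hn0C, hn1C, hwdef, hwc]
      linear_combination ((m:ℂ)^2*(a+b)/2)*hnC + (-(m:ℂ)^2*(X*conj X - Y*conj Y)/2)*hvdef
        + ((d:ℂ)*v*X*conj Y)*hcV + ((d:ℂ)*conj X*Y + c*(d:ℂ)*X*conj Y)*hm2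
    clear_value w Qm
    set Q : ℝ := Qm / m ^ 2 with hQdef
    clear_value Q
    have hQm' : Qm = Q * m ^ 2 := by rw [hQdef]; field_simp
    have hval : conj X * (a * X + (d:ℂ) * Y) + conj Y * (c * (d:ℂ) * X + b * Y)
        = (a + b) / 2 + v * ((Q : ℝ) : ℂ) := by
      have hQmC2 : ((Qm : ℝ) : ℂ) = ((Q : ℝ) : ℂ) * (m:ℂ)^2 := by
        rw [hQm']; push_cast; ring
      apply mul_right_cancel₀ (pow_ne_zero 2 hmC)
      rw [hvalm, hQmC2]
      ring
    rw [hval]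
    have hQm2 : Qm ^ 2 ≤ m ^ 4 / 4 + d ^ 2 * m ^ 2 := by
      have key : d^2*(m^4/4 + d^2*m^2) - d^2*Qm^2
          = m^2*(d^2*(n₀-n₁) - ρ/2)^2 + (m^2/4+d^2)*(4*(d^2*m^2*(n₀*n₁)) - ρ^2) := by
        rw [hQmdef]
        linear_combination (-(d^2*m^2*(d^2+m^2/4)*(n₀+n₁+1)))*hn
      have h1 : 0 ≤ m^2*(d^2*(n₀-n₁) - ρ/2)^2 := by positivity
      have h2 : 0 ≤ (m^2/4+d^2)*(4*(d^2*m^2*(n₀*n₁)) - ρ^2) :=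
        mul_nonneg (by positivity) (by linarith)
      nlinarith [mul_pos hd hd]
    have hK2 : m ^ 4 / 4 + d ^ 2 * m ^ 2 = (m^2 * R / 2)^2 := by
      have : (m^2*R/2)^2 = R^2 * m^2 * m^2 / 4 := by ring
      rw [this, hR2, hsdef]; field_simp
    have hKpos : 0 < m^2 * R / 2 := by positivity
    have hQmle : Qm ≤ m^2 * R / 2 := by nlinarith [hQm2, hK2, hKpos, sq_nonneg (Qm + m^2*R/2)]
    have hQmge : -(m^2 * R / 2) ≤ Qm := by nlinarith [hQm2, hK2, hKpos, sq_nonneg (Qm - m^2*R/2)]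
    have hQle : Q ≤ R / 2 := by
      rw [hQdef, div_le_iff₀ (by positivity : (0:ℝ) < m^2)]
      nlinarith [hQmle]
    have hQge : -(R / 2) ≤ Q := by
      rw [hQdef, le_div_iff₀ (by positivity : (0:ℝ) < m^2)]
      nlinarith [hQmge]
    refine ⟨(R/2 + Q) / R, (R/2 - Q) / R, div_nonneg (by linarith) hRpos.le,
      div_nonneg (by linarith) hRpos.le, by field_simp; ring, ?_⟩
    rw [Complex.real_smul, Complex.real_smul]
    push_cast
    field_simp
    ring
  · rintro ⟨t₁, t₂, ht₁, ht₂, hsum, rfl⟩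
    set p : ℂ := (d : ℂ) * conj v with hp
    set e : ℂ := (m:ℂ)^2 * ((R:ℂ) - 1) / 2 with he
    set f : ℂ := -((m:ℂ)^2 * ((R:ℂ) + 1) / 2) with hf
    set v₁ := vec2 p e with hv₁
    set v₂ := vec2 p f with hv₂
    set μ : ℂ := (a + b + v * (R:ℂ)) / 2 with hμ
    set ν : ℂ := (a + b - v * (R:ℂ)) / 2 with hν
    have hTv₁ : Matrix.toEuclideanCLM (𝕜 := ℂ) !![a, (d:ℂ); c * d, b] v₁ = μ • v₁ := by
      ext i
      fin_cases i
      · show (Matrix.toEuclideanCLM (𝕜 := ℂ) !![a, (d:ℂ); c * d, b] v₁) 0 = (μ • v₁) 0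
        rw [hv₁, toCLM_apply, e00, e01]
        show a * p + (d:ℂ) * e = μ * p
        rw [hp, he, hμ]
        linear_combination ((d:ℂ)*(R:ℂ)/2 - (d:ℂ)/2)*hm2 + (-((d:ℂ)*conj v)/2)*hvdef
      · show (Matrix.toEuclideanCLM (𝕜 := ℂ) !![a, (d:ℂ); c * d, b] v₁) 1 = (μ • v₁) 1
        rw [hv₁, toCLM_apply, e10, e11]
        show c * (d:ℂ) * p + b * e = μ * e
        rw [hp, he, hμ]
        linear_combination (d:ℂ)^2*hcV - (v/4)*hR2m + ((m:ℂ)^2*((R:ℂ)-1)/4)*hvdef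
    have hTv₂ : Matrix.toEuclideanCLM (𝕜 := ℂ) !![a, (d:ℂ); c * d, b] v₂ = ν • v₂ := by
      ext i
      fin_cases i
      · show (Matrix.toEuclideanCLM (𝕜 := ℂ) !![a, (d:ℂ); c * d, b] v₂) 0 = (ν • v₂) 0
        rw [hv₂, toCLM_apply, e00, e01]
        show a * p + (d:ℂ) * f = ν * p
        rw [hp, hf, hν]
        linear_combination (-((d:ℂ)*(R:ℂ))/2 - (d:ℂ)/2)*hm2 + (-((d:ℂ)*conj v)/2)*hvdef
      · show (Matrix.toEuclideanCLM (𝕜 := ℂ) !![a, (d:ℂ); c * d, b] v₂) 1 = (ν • v₂) 1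
        rw [hv₂, toCLM_apply, e10, e11]
        show c * (d:ℂ) * p + b * f = ν * f
        rw [hp, hf, hν]
        linear_combination (d:ℂ)^2*hcV - (v/4)*hR2m + (-(m:ℂ)^2*((R:ℂ)+1)/4)*hvdef
    have ho : inner (𝕜 := ℂ) v₁ v₂ = 0 := by
      rw [PiLp.inner_apply, Fin.sum_univ_two]
      simp only [RCLike.inner_apply, hv₁, hv₂, vec2_zero, vec2_one]
      have hcp : conj p = (d:ℂ) * v := by
        rw [hp]; simp [map_mul, Complex.conj_conj, Complex.conj_ofReal]
      have hce : conj e = e := by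
        rw [he]; simp [map_div₀, map_mul, map_sub, map_pow, map_ofNat, Complex.conj_ofReal]
      rw [hcp, hce, hp, he, hf]
      linear_combination (-((d:ℂ)^2))*hm2 - ((m:ℂ)^2/4)*hR2m
    have hv₁ne : v₁ ≠ 0 := by
      intro h0
      apply mul_ne_zero hdC hcv
      rw [← hp]
      calc p = v₁ 0 := by rw [hv₁]; rfl
        _ = 0 := by rw [h0]; rfl
    have hv₂ne : v₂ ≠ 0 := by
      intro h0
      apply mul_ne_zero hdC hcv
      rw [← hp]
      calc p = v₂ 0 := by rw [hv₂]; rfl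
        _ = 0 := by rw [h0]; rfl
    set w₁ : EuclideanSpace ℂ (Fin 2) := ((‖v₁‖ : ℂ))⁻¹ • v₁ with hw₁
    set w₂ : EuclideanSpace ℂ (Fin 2) := ((‖v₂‖ : ℂ))⁻¹ • v₂ with hw₂
    have hw₁n : ‖w₁‖ = 1 := by rw [hw₁]; exact norm_smul_inv_norm (𝕜 := ℂ) hv₁ne
    have hw₂n : ‖w₂‖ = 1 := by rw [hw₂]; exact norm_smul_inv_norm (𝕜 := ℂ) hv₂ne
    have hTw₁ : Matrix.toEuclideanCLM (𝕜 := ℂ) !![a, (d:ℂ); c * d, b] w₁ = μ • w₁ := by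
      rw [hw₁, map_smul, hTv₁, smul_comm]
    have hTw₂ : Matrix.toEuclideanCLM (𝕜 := ℂ) !![a, (d:ℂ); c * d, b] w₂ = ν • w₂ := by
      rw [hw₂, map_smul, hTv₂, smul_comm]
    have how : inner (𝕜 := ℂ) w₁ w₂ = 0 := by
      rw [hw₁, hw₂, inner_smul_left, inner_smul_right, ho]
      ring
    have hα : (Real.sqrt t₁) ^ 2 = t₁ := Real.sq_sqrt ht₁
    have hβ : (Real.sqrt t₂) ^ 2 = t₂ := Real.sq_sqrt ht₂
    obtain ⟨hz1, hz2⟩ := eig_combo (Matrix.toEuclideanCLM (𝕜 := ℂ) !![a, (d:ℂ); c * d, b])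
      w₁ w₂ μ ν hTw₁ hTw₂ how hw₁n hw₂n
      (Real.sqrt t₁) (Real.sqrt t₂) (by rw [hα, hβ]; exact hsum)
    refine ⟨_, hz1, ?_⟩
    rw [hz2]
    have hαC : ((Real.sqrt t₁ : ℝ) : ℂ) ^ 2 = ((t₁ : ℝ) : ℂ) := by exact_mod_cast congrArg Complex.ofReal hα
    have hβC : ((Real.sqrt t₂ : ℝ) : ℂ) ^ 2 = ((t₂ : ℝ) : ℂ) := by exact_mod_cast congrArg Complex.ofReal hβ
    rw [hαC, hβC, Complex.real_smul, Complex.real_smul, hμ, hν]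

set_option maxHeartbeats 1600000 in
theorem stmt_14 (a b c : ℂ) (hab : a ≠ b) (d : ℝ) (hd : 0 < d) :
    ((∃ z w : ℂ, numRange !![a, (d : ℂ); c * d, b] = segment ℝ z w) ↔
      c = (a - b) ^ 2 / ((‖a - b‖ : ℂ) ^ 2)) ∧
    (c = (a - b) ^ 2 / ((‖a - b‖ : ℂ) ^ 2) →
      numRange !![a, (d : ℂ); c * d, b] =
        segment ℝ
          ((a + b + (a - b) * Real.sqrt (1 + 4 * d ^ 2 / ‖a - b‖ ^ 2)) / 2)
          ((a + b - (a - b) * Real.sqrt (1 + 4 * d ^ 2 / ‖a - b‖ ^ 2)) / 2)) := by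
  have hv : a - b ≠ 0 := sub_ne_zero.2 hab
  have hdC : (d : ℂ) ≠ 0 := by exact_mod_cast hd.ne'
  have hcv : conj (a - b) ≠ 0 := fun h0 => hv (by rw [← Complex.conj_conj (a - b), h0, map_zero])
  have hm2 : ((‖a - b‖ : ℝ) : ℂ) ^ 2 = (a - b) * conj (a - b) := by
    rw [Complex.mul_conj]; norm_cast
    exact Complex.sq_norm _
  have e00 : (!![a, (d:ℂ); c * d, b]) 0 0 = a := by simp
  have e01 : (!![a, (d:ℂ); c * d, b]) 0 1 = (d:ℂ) := by simp
  have e10 : (!![a, (d:ℂ); c * d, b]) 1 0 = c * d := by simp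
  have e11 : (!![a, (d:ℂ); c * d, b]) 1 1 = b := by simp
  constructor
  · constructor
    · rintro ⟨z, w, h⟩
      -- derive c from the collinearity of four points of the numerical range
      have hA : a ∈ segment ℝ z w := by
        rw [← h]
        have := mem_numRange (!![a, (d:ℂ); c * d, b]) 1 0 (by simp)
        simpa [e00, e01, e10, e11] using this
      have hB : b ∈ segment ℝ z w := by
        rw [← h]
        have := mem_numRange (!![a, (d:ℂ); c * d, b]) 0 1 (by simp)
        simpa [e00, e01, e10, e11] using this
      set σ : ℝ := (Real.sqrt 2)⁻¹ with hσdef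
      have hσσ : σ * σ = 1/2 := by
        rw [hσdef, ← mul_inv, Real.mul_self_sqrt (by norm_num : (0:ℝ) ≤ 2)]
        norm_num
      have hσ2 : Complex.normSq (σ : ℂ) = 1/2 := by
        rw [Complex.normSq_ofReal, hσσ]
      have hσ2C : ((σ:ℂ)) * ((σ:ℂ)) = 1/2 := by
        rw [← Complex.ofReal_mul, hσσ]; norm_num
      have hP : (a + b + (d:ℂ) + c * d) / 2 ∈ segment ℝ z w := by
        rw [← h]
        refine ⟨vec2 (σ:ℂ) (σ:ℂ), vec2_norm _ _ (by rw [hσ2]; norm_num), ?_⟩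
        rw [quadForm]
        simp only [vec2_zero, vec2_one, e00, e01, e10, e11, Complex.conj_ofReal]
        linear_combination (-(a + b + (d:ℂ) + c*(d:ℂ)))*hσ2C
      have hQ : (a + b + (d:ℂ)*Complex.I - c * d * Complex.I) / 2 ∈ segment ℝ z w := by
        rw [← h]
        refine ⟨vec2 (σ:ℂ) ((σ:ℂ)*Complex.I), vec2_norm _ _
          (by rw [Complex.normSq_mul, Complex.normSq_I, hσ2]; norm_num), ?_⟩
        rw [quadForm]
        simp only [vec2_zero, vec2_one, e00, e01, e10, e11, Complex.conj_ofReal, map_mul,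
          Complex.conj_I]
        linear_combination (-(a + b + (d:ℂ)*Complex.I - c*(d:ℂ)*Complex.I))*hσ2C
          + ((σ:ℂ)*(σ:ℂ)*b)*Complex.I_sq
      obtain ⟨ta, tb, _, _, hta, hAc⟩ := hA
      obtain ⟨ua, ub, _, _, hua, hBc⟩ := hB
      obtain ⟨pa, pb, _, _, hpa, hPc⟩ := hP
      obtain ⟨qa, qb, _, _, hqa, hQc⟩ := hQ
      rw [Complex.real_smul, Complex.real_smul] at hAc hBc hPc hQc
      have htaC : ((ta:ℝ):ℂ) + ((tb:ℝ):ℂ) = 1 := by exact_mod_cast congrArg Complex.ofReal hta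
      have huaC : ((ua:ℝ):ℂ) + ((ub:ℝ):ℂ) = 1 := by exact_mod_cast congrArg Complex.ofReal hua
      have hpaC : ((pa:ℝ):ℂ) + ((pb:ℝ):ℂ) = 1 := by exact_mod_cast congrArg Complex.ofReal hpa
      have hqaC : ((qa:ℝ):ℂ) + ((qb:ℝ):ℂ) = 1 := by exact_mod_cast congrArg Complex.ofReal hqa
      have habD : a - b = (((ta:ℝ):ℂ) - ((ua:ℝ):ℂ)) * (z - w) := by
        linear_combination -hAc + hBc + w*htaC - w*huaC
      have hδ : (((ta:ℝ):ℂ) - ((ua:ℝ):ℂ)) ≠ 0 := by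
        intro h0; rw [h0, zero_mul] at habD; exact hv habD
      have hDne : z - w ≠ 0 := by
        intro h0; rw [h0, mul_zero] at habD; exact hv habD
      have hPd : (d:ℂ) * (1 + c) / 2 = (((pa:ℝ):ℂ) - (((ta:ℝ):ℂ) + ((ua:ℝ):ℂ))/2) * (z - w) := by
        linear_combination -hPc + hAc/2 + hBc/2 + w*hpaC - w*htaC/2 - w*huaC/2
      have hQd : (d:ℂ) * Complex.I * (1 - c) / 2
          = (((qa:ℝ):ℂ) - (((ta:ℝ):ℂ) + ((ua:ℝ):ℂ))/2) * (z - w) := by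
        linear_combination -hQc + hAc/2 + hBc/2 + w*hqaC - w*htaC/2 - w*huaC/2
      set ρ₁ : ℝ := (pa - (ta + ua)/2) / (ta - ua) with hρ₁def
      set ρ₂ : ℝ := (qa - (ta + ua)/2) / (ta - ua) with hρ₂def
      have hδR : (ta : ℝ) - ua ≠ 0 := by
        intro h0; apply hδ; exact_mod_cast congrArg Complex.ofReal h0
      have h1 : (d:ℂ) * (1 + c) / 2 = ((ρ₁:ℝ):ℂ) * (a - b) := by
        rw [hPd, habD, hρ₁def]
        push_cast
        field_simp [hδ]
      have h2 : (d:ℂ) * Complex.I * (1 - c) / 2 = ((ρ₂:ℝ):ℂ) * (a - b) := by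
        rw [hQd, habD, hρ₂def]
        push_cast
        field_simp [hδ]
      have h3 : (d:ℂ) * Complex.I = (((ρ₂:ℝ):ℂ) + ((ρ₁:ℝ):ℂ) * Complex.I) * (a - b) := by
        linear_combination Complex.I * h1 + h2
      have hne : (((ρ₂:ℝ):ℂ) + ((ρ₁:ℝ):ℂ) * Complex.I) ≠ 0 := by
        intro h0; rw [h0, zero_mul] at h3
        exact mul_ne_zero hdC Complex.I_ne_zero h3
      have h4 : (d:ℂ) * (-Complex.I) = (((ρ₂:ℝ):ℂ) + ((ρ₁:ℝ):ℂ) * (-Complex.I)) * conj (a - b) := by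
        have := congrArg (starRingEnd ℂ) h3
        simpa only [map_mul, map_add, Complex.conj_I, Complex.conj_ofReal] using this
      have hne' : (((ρ₂:ℝ):ℂ) + ((ρ₁:ℝ):ℂ) * (-Complex.I)) ≠ 0 := by
        intro h0; rw [h0, zero_mul] at h4
        apply mul_ne_zero hdC Complex.I_ne_zero
        have : (d:ℂ) * Complex.I = -((d:ℂ) * (-Complex.I)) := by ring
        rw [this, h4]; ring
      have hgoal : c * conj (a - b) = a - b := by
        have key : ((((ρ₂:ℝ):ℂ) + ((ρ₁:ℝ):ℂ) * Complex.I) * (((ρ₂:ℝ):ℂ) + ((ρ₁:ℝ):ℂ) * (-Complex.I)) * (d:ℂ))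
            * (c * conj (a - b) - (a - b)) = 0 := by
          linear_combination (2*(((ρ₂:ℝ):ℂ) + ((ρ₁:ℝ):ℂ) * Complex.I)*(((ρ₂:ℝ):ℂ) + ((ρ₁:ℝ):ℂ) * (-Complex.I))*conj (a - b))*h1
            + (2*((ρ₁:ℝ):ℂ)*(d:ℂ)*Complex.I + (d:ℂ)*(((ρ₂:ℝ):ℂ) + ((ρ₁:ℝ):ℂ) * (-Complex.I)))*h3
            + ((d:ℂ)*(((ρ₂:ℝ):ℂ) + ((ρ₁:ℝ):ℂ) * Complex.I) - 2*((ρ₁:ℝ):ℂ)*(((ρ₂:ℝ):ℂ) + ((ρ₁:ℝ):ℂ) * Complex.I)*(a - b))*h4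
        rcases mul_eq_zero.1 key with h0 | h0
        · exact absurd h0 (mul_ne_zero (mul_ne_zero hne hne') hdC)
        · exact sub_eq_zero.1 h0
      rw [hm2, eq_div_iff (mul_ne_zero hv hcv)]
      linear_combination (a - b) * hgoal
    · intro hc
      exact ⟨_, _, lemmaA a b c hab d hd hc⟩
  · intro hc
    exact lemmaA a b c hab d hd hc
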